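/- arXiv:1405.1772 — 3 statements merged into one kernel-verified Lean document; each statement's English description precedes it below -/
import Mathlib

section
/- Let (K, v) be a separably closed valued field of characteristic p > 0 with valuation ring O and value group Γ = v(K^×). For j = 1, 2, let r_j(x) = ∑_{i=0}^{d_j} a_{j,i}·x^{p^i} be additive polynomials with all a_{j,i} ∈ O, a_{j,0} ≠ 0, and min_i v(a_{j,i}) = 0. Let b_1, b_2 ∈ K and δ_1, δ_2 ∈ Γ, and suppose Υ(r_1, δ_1) ≤ Υ(r_2, δ_2). Then there exists u ∈ K with v(r_1(u) − b_1) ≥ δ_1 and v(r_2(u) − b_2) ≥ δ_2 if and only if there exists u ∈ K with v(r_1(u) − b_1) ≥ δ_1 and r_2(u) = b_2. -/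
/-- A valuation on a field `K` with values in the linearly ordered abelian group `Γ`
(together with `∞ = ⊤`), surjective onto `Γ`, i.e. `Γ = v(K^×)`. -/
structure ValuedFieldAux (K : Type*) [Field K] (Γ : Type*)
    [AddCommGroup Γ] [LinearOrder Γ] [IsOrderedAddMonoid Γ] where
  v : K → WithTop Γ
  v_eq_top_iff : ∀ x : K, v x = ⊤ ↔ x = 0
  v_mul : ∀ x y : K, v (x * y) = v x + v y
  v_add : ∀ x y : K, min (v x) (v y) ≤ v (x + y)
  v_surj : ∀ γ : Γ, ∃ x : K, v x = (γ : WithTop Γ)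


section Helpers

variable {K : Type*} [Field K] {Γ : Type*} [AddCommGroup Γ] [LinearOrder Γ] [IsOrderedAddMonoid Γ]


variable (vf : ValuedFieldAux K Γ)

lemma vf_ne_top {x : K} (hx : x ≠ 0) : vf.v x ≠ ⊤ := fun h => hx ((vf.v_eq_top_iff x).1 h)

lemma vf_zero : vf.v 0 = ⊤ := (vf.v_eq_top_iff 0).2 rfl

lemma vf_one : vf.v 1 = 0 := by
  have h := vf.v_mul 1 1
  rw [mul_one] at h
  obtain ⟨g, hg⟩ := WithTop.ne_top_iff_exists.1 (vf_ne_top vf (one_ne_zero (α := K)))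
  rw [← hg] at h ⊢
  rw [← WithTop.coe_add, WithTop.coe_eq_coe] at h
  have : g = 0 := left_eq_add.mp h
  rw [this]; rfl

lemma vf_neg_one : vf.v (-1 : K) = 0 := by
  have h := vf.v_mul (-1 : K) (-1)
  rw [neg_one_mul, neg_neg, vf_one] at h
  obtain ⟨g, hg⟩ := WithTop.ne_top_iff_exists.1 (vf_ne_top vf (neg_ne_zero.2 (one_ne_zero (α := K))))
  rw [← hg]
  rw [← hg, ← WithTop.coe_add, eq_comm, WithTop.coe_eq_zero] at h
  have : g = 0 := by
    rcases lt_trichotomy g 0 with h0 | h0 | h0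
    · have h2 := add_lt_add h0 h0
      rw [h, add_zero] at h2
      exact absurd h2 (lt_irrefl 0)
    · exact h0
    · have h2 := add_lt_add h0 h0
      rw [h, zero_add] at h2
      exact absurd h2 (lt_irrefl 0)
  rw [this]; rfl

lemma vf_neg (x : K) : vf.v (-x) = vf.v x := by
  have h := vf.v_mul (-1) x
  rw [neg_one_mul, vf_neg_one, zero_add] at h
  exact h

lemma vf_pow (x : K) (n : ℕ) : vf.v (x ^ n) = n • vf.v x := by
  induction n with
  | zero => simpa using vf_one vf
  | succ n ih => rw [pow_succ, vf.v_mul, ih, succ_nsmul]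

lemma vf_sum_ge {ι : Type*} (s : Finset ι) (g : ι → K) (γ : WithTop Γ)
    (h : ∀ i ∈ s, γ ≤ vf.v (g i)) : γ ≤ vf.v (∑ i ∈ s, g i) := by
  induction s using Finset.cons_induction with
  | empty => simp [vf_zero]
  | cons a s ha ih =>
    rw [Finset.sum_cons]
    refine le_trans (le_min (h a (Finset.mem_cons_self a s)) ?_) (vf.v_add _ _)
    exact ih fun i hi => h i (Finset.mem_cons_of_mem hi)

lemma vf_exists_le_sum (s : Multiset K) (hs : s ≠ 0) : ∃ a ∈ s, vf.v a ≤ vf.v s.sum := by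
  induction s using Multiset.induction with
  | empty => exact absurd rfl hs
  | cons a s ih =>
    rcases eq_or_ne s 0 with rfl | hs0
    · exact ⟨a, Multiset.mem_cons_self a 0, by simp⟩
    · obtain ⟨b, hb, hvb⟩ := ih hs0
      rw [Multiset.sum_cons]
      rcases min_cases (vf.v a) (vf.v s.sum) with ⟨hmin, _⟩ | ⟨hmin, hle⟩
      · exact ⟨a, Multiset.mem_cons_self a s, le_trans (hmin ▸ vf.v_add a s.sum) (le_refl _) ⟩
      · exact ⟨b, Multiset.mem_cons_of_mem hb, le_trans hvb (le_trans (le_of_eq hmin.symm) (vf.v_add a s.sum))⟩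

lemma vf_prod (s : Multiset K) : vf.v s.prod = (s.map vf.v).sum := by
  induction s using Multiset.induction with
  | empty => simpa using vf_one vf
  | cons a s ih => rw [Multiset.prod_cons, vf.v_mul, ih, Multiset.map_cons, Multiset.sum_cons]

lemma sum_neg_of_forall_neg (s : Multiset (WithTop Γ)) (hs : s ≠ 0)
    (h : ∀ a ∈ s, a < 0) : s.sum < 0 := by
  induction s using Multiset.induction with
  | empty => exact absurd rfl hs
  | cons a s ih =>
    rw [Multiset.sum_cons]
    rcases eq_or_ne s 0 with rfl | hs0
    · simpa using h a (Multiset.mem_cons_self a 0)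
    · have h1 : a < 0 := h a (Multiset.mem_cons_self a s)
      have h2 : s.sum < 0 := ih hs0 fun b hb => h b (Multiset.mem_cons_of_mem hb)
      calc a + s.sum ≤ a + 0 := add_le_add_right h2.le a
        _ = a := add_zero a
        _ < 0 := h1

end Helpers

section LemA

open Polynomial Finset

variable {K : Type*} [Field K] {Γ : Type*} [AddCommGroup Γ] [LinearOrder Γ] [IsOrderedAddMonoid Γ]
variable (vf : ValuedFieldAux K Γ)

/-- Key lemma: existence of a root of `∑ aᵢ y^(pⁱ) = c` of nonnegative valuation. -/
lemma exists_root_nonneg (p : ℕ) (hp : p.Prime) [CharP K p] [IsSepClosed K]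
    (d : ℕ) (a : ℕ → K) (ha0 : a 0 ≠ 0) (c : K) (hc0 : c ≠ 0)
    (hm : ∃ m ∈ Finset.range (d + 1), vf.v (a m) ≤ vf.v c) :
    ∃ y : K, (∑ i ∈ Finset.range (d + 1), a i * y ^ p ^ i) = c ∧ 0 ≤ vf.v y := by
  classical
  haveI : Fact p.Prime := ⟨hp⟩
  have hp1 : 1 < p := hp.one_lt
  set f : K[X] := (∑ i ∈ Finset.range (d + 1), C (a i) * X ^ p ^ i) - C c with hf
  -- coefficients of f
  have hpinj : ∀ i j : ℕ, p ^ i = p ^ j → i = j :=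
    fun i j h => Nat.pow_right_injective hp.two_le h
  have hcoeff : ∀ n : ℕ, f.coeff n =
      (∑ i ∈ Finset.range (d + 1), if n = p ^ i then a i else 0) - (if n = 0 then c else 0) := by
    intro n
    rw [hf, Polynomial.coeff_sub, Polynomial.finset_sum_coeff, Polynomial.coeff_C]
    congr 1
    refine Finset.sum_congr rfl fun i _ => ?_
    rw [Polynomial.coeff_C_mul, Polynomial.coeff_X_pow]
    split <;> simp_all
  have hcoeff_pow : ∀ m ∈ Finset.range (d + 1), f.coeff (p ^ m) = a m := by
    intro m hm'
    rw [hcoeff]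
    have hne : p ^ m ≠ 0 := (pow_pos hp.pos m).ne'
    rw [if_neg hne, sub_zero, Finset.sum_eq_single m]
    · rw [if_pos rfl]
    · intro i _ hne2
      rw [if_neg fun h => hne2 (hpinj i m h.symm)]
    · intro h; exact absurd hm' h
  have hcoeff0 : f.coeff 0 = -c := by
    rw [hcoeff, if_pos rfl]
    rw [Finset.sum_eq_zero, zero_sub]
    intro i _
    rw [if_neg (pow_pos hp.pos i).ne]
  -- the top index D
  set s : Finset ℕ := (Finset.range (d + 1)).filter (fun i => a i ≠ 0) with hs
  have hsne : s.Nonempty := ⟨0, Finset.mem_filter.2 ⟨Finset.mem_range.2 (Nat.succ_pos d), ha0⟩⟩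
  set D : ℕ := s.max' hsne with hD
  have hDs : D ∈ s := s.max'_mem hsne
  have hDrange : D ∈ Finset.range (d + 1) := (Finset.mem_filter.1 hDs).1
  have haD : a D ≠ 0 := (Finset.mem_filter.1 hDs).2
  have hle_D : ∀ i ∈ s, i ≤ D := fun i hi => s.le_max' i hi
  -- natDegree of f
  have hcoeff_high : ∀ n : ℕ, p ^ D < n → f.coeff n = 0 := by
    intro n hn
    rw [hcoeff, if_neg (show ¬ n = 0 by omega), sub_zero]
    refine Finset.sum_eq_zero fun i hi => ?_
    split
    · rename_i h
      by_contra hai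
      have : i ∈ s := Finset.mem_filter.2 ⟨hi, hai⟩
      have := hle_D i this
      have : p ^ i ≤ p ^ D := Nat.pow_le_pow_right hp.pos this
      omega
    · rfl
  have hfD : f.coeff (p ^ D) = a D := hcoeff_pow D hDrange
  have hdeg : f.natDegree = p ^ D := by
    refine le_antisymm (Polynomial.natDegree_le_iff_coeff_eq_zero.2 fun N hN => hcoeff_high N hN)
      (Polynomial.le_natDegree_of_ne_zero (by rw [hfD]; exact haD))
  have hfne : f ≠ 0 := fun h => haD (by rw [← hfD, h, Polynomial.coeff_zero])
  have hlead : f.leadingCoeff = a D := by rw [Polynomial.leadingCoeff, hdeg, hfD]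
  -- separability
  have hderiv : f.derivative = C (a 0) := by
    rw [hf, derivative_sub, derivative_C, sub_zero, derivative_sum]
    rw [Finset.sum_eq_single 0]
    · simp
    · intro i hi hne2
      rw [Polynomial.derivative_C_mul_X_pow]
      have : ((p ^ i : ℕ) : K) = 0 := by
        have : (p : K) = 0 := CharP.cast_eq_zero K p
        rw [Nat.cast_pow, this, zero_pow (by omega)]
      rw [this, mul_zero, map_zero, zero_mul]
    · intro h; exact absurd (Finset.mem_range.2 (Nat.succ_pos d)) h
  have hsep : f.Separable := by
    rw [Polynomial.separable_def, hderiv]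
    exact ⟨0, C (a 0)⁻¹, by rw [zero_mul, zero_add, ← C_mul, inv_mul_cancel₀ ha0, C_1]⟩
  have hsplits : f.Splits := IsSepClosed.splits_of_separable f hsep
  have hroots : f.roots.card = f.natDegree := (Polynomial.splits_iff_card_roots).1 hsplits
  -- main contradiction argument
  by_contra hcon
  push_neg at hcon
  have hroot_neg : ∀ z ∈ f.roots, vf.v z < 0 := by
    intro z hz
    have hz' : f.eval z = 0 := Polynomial.isRoot_of_mem_roots hz
    have heq : (∑ i ∈ Finset.range (d + 1), a i * z ^ p ^ i) = c := by
      have : f.eval z = (∑ i ∈ Finset.range (d + 1), a i * z ^ p ^ i) - c := by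
        rw [hf]
        simp [Polynomial.eval_finset_sum]
      rw [this] at hz'
      exact sub_eq_zero.1 hz'
    exact hcon z heq
  obtain ⟨m, hmrange, hmle⟩ := hm
  have ham : a m ≠ 0 := by
    intro h
    rw [h, vf_zero, top_le_iff] at hmle
    exact hc0 ((vf.v_eq_top_iff c).1 hmle)
  have hms : m ∈ s := Finset.mem_filter.2 ⟨hmrange, ham⟩
  have hmD : m ≤ D := hle_D m hms
  have hpmle : p ^ m ≤ p ^ D := Nat.pow_le_pow_right hp.pos hmD
  set j : ℕ := p ^ D - p ^ m with hj
  -- Vieta at p^m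
  have hvieta : a m = a D * (-1) ^ j * f.roots.esymm j := by
    have h1 : (p ^ m : ℕ) ≤ f.natDegree := by rw [hdeg]; exact hpmle
    have := Polynomial.coeff_eq_esymm_roots_of_card hroots h1
    rw [hcoeff_pow m hmrange, hlead, hdeg] at this
    exact this
  -- find a subset S of roots with small valuation sum
  have hesne : ((f.roots.powersetCard j).map Multiset.prod) ≠ 0 := by
    rw [Ne, Multiset.map_eq_zero, ← Multiset.card_eq_zero, Multiset.card_powersetCard]
    have : j ≤ Multiset.card f.roots := by rw [hroots, hdeg]; omega
    exact (Nat.choose_pos this).ne'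
  obtain ⟨b, hbmem, hble⟩ := vf_exists_le_sum vf _ hesne
  obtain ⟨S, hSmem, rfl⟩ := Multiset.mem_map.1 hbmem
  obtain ⟨hSle, hScard⟩ := Multiset.mem_powersetCard.1 hSmem
  -- hkey : v(a D) + sum of valuations over S ≤ v(a m)
  have hkey : vf.v (a D) + (S.map vf.v).sum ≤ vf.v (a m) := by
    have h1 : vf.v (a m) = vf.v (a D) + vf.v ((-1 : K) ^ j) + vf.v (f.roots.esymm j) := by
      rw [hvieta, vf.v_mul, vf.v_mul]
    have h2 : vf.v ((-1 : K) ^ j) = 0 := by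
      rw [vf_pow, vf_neg_one, smul_zero]
    rw [h1, h2, add_zero]
    rw [← vf_prod]
    exact add_le_add_right hble _
  -- T = rest of roots
  set T : Multiset K := f.roots - S with hT
  have hST : S + T = f.roots := by
    rw [hT, add_tsub_cancel_of_le hSle]
  have hTcard : Multiset.card T = p ^ m := by
    have := Multiset.card_sub hSle
    rw [← hT] at this
    rw [this, hroots, hdeg, hScard, hj]
    omega
  have hTne : T ≠ 0 := by
    intro h
    rw [h, Multiset.card_zero] at hTcard
    exact absurd hTcard.symm (Nat.pow_pos (n := m) hp.pos).ne'
  have hTneg : ((T.map vf.v)).sum < 0 := by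
    refine sum_neg_of_forall_neg _ (by rwa [Ne, Multiset.map_eq_zero]) fun x hx => ?_
    obtain ⟨z, hz, rfl⟩ := Multiset.mem_map.1 hx
    exact hroot_neg z (Multiset.mem_of_le (Multiset.sub_le_self _ _) hz)
  -- valuation of c
  have hvc : vf.v c = vf.v (a D) + (f.roots.map vf.v).sum := by
    have h1 : f.eval 0 = -c := by rw [← Polynomial.coeff_zero_eq_eval_zero, hcoeff0]
    have h2 : f = C f.leadingCoeff * (f.roots.map (fun z => X - C z)).prod :=
      (Polynomial.C_leadingCoeff_mul_prod_multiset_X_sub_C hroots).symm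
    have h3 : f.eval 0 = f.leadingCoeff * ((f.roots.map (fun z => -z)).prod) := by
      conv_lhs => rw [h2]
      rw [Polynomial.eval_mul, Polynomial.eval_C, Polynomial.eval_multiset_prod,
        Multiset.map_map]
      congr 2
      refine Multiset.map_congr rfl fun z _ => ?_
      simp
    have h4 : vf.v c = vf.v (-c) := (vf_neg vf c).symm
    rw [h4, ← h1, h3, vf.v_mul, hlead, vf_prod, Multiset.map_map]
    congr 2
    exact Multiset.map_congr rfl fun z _ => vf_neg vf z
  -- wrap up
  have hfin : vf.v (a D) + (S.map vf.v).sum ≠ ⊤ := by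
    intro h
    rw [h, top_le_iff] at hkey
    exact ham ((vf.v_eq_top_iff (a m)).1 hkey)
  have hsplit_sum : (f.roots.map vf.v).sum = (S.map vf.v).sum + (T.map vf.v).sum := by
    rw [← hST, Multiset.map_add, Multiset.sum_add]
  have : vf.v c < vf.v c := by
    calc vf.v c = vf.v (a D) + ((S.map vf.v).sum + (T.map vf.v).sum) := by rw [hvc, hsplit_sum]
      _ = (vf.v (a D) + (S.map vf.v).sum) + (T.map vf.v).sum := by rw [add_assoc]
      _ < (vf.v (a D) + (S.map vf.v).sum) + 0 := WithTop.add_lt_add_left hfin hTneg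
      _ = vf.v (a D) + (S.map vf.v).sum := add_zero _
      _ ≤ vf.v (a m) := hkey
      _ ≤ vf.v c := hmle
  exact absurd this (lt_irrefl _)

end LemA

section LemB

open Polynomial Finset

variable {K : Type*} [Field K] {Γ : Type*} [AddCommGroup Γ] [LinearOrder Γ] [IsOrderedAddMonoid Γ]
variable (vf : ValuedFieldAux K Γ)

lemma exists_exact_solution (p : ℕ) (hp : p.Prime) [CharP K p] [IsSepClosed K]
    (d : ℕ) (a : ℕ → K) (ha0 : a 0 ≠ 0) (δ μ : Γ)
    (hμ : (δ : WithTop Γ) = (Finset.range (d + 1)).inf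
      (fun i => p ^ i • (μ : WithTop Γ) + vf.v (a i)))
    (c : K) (hc0 : c ≠ 0) (hc : (δ : WithTop Γ) ≤ vf.v c) :
    ∃ w : K, (∑ i ∈ Finset.range (d + 1), a i * w ^ p ^ i) = c ∧
      (μ : WithTop Γ) ≤ vf.v w := by
  obtain ⟨t, ht⟩ := vf.v_surj μ
  obtain ⟨e, he⟩ := vf.v_surj δ
  have ht0 : t ≠ 0 := by
    intro h; rw [h, vf_zero] at ht; exact WithTop.coe_ne_top ht.symm
  have he0 : e ≠ 0 := by
    intro h; rw [h, vf_zero] at he; exact WithTop.coe_ne_top he.symm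
  have hei : vf.v e⁻¹ = ((-δ : Γ) : WithTop Γ) := by
    have h1 := vf.v_mul e e⁻¹
    rw [mul_inv_cancel₀ he0, vf_one, he] at h1
    obtain ⟨g, hg⟩ := WithTop.ne_top_iff_exists.1 (vf_ne_top vf (inv_ne_zero he0))
    rw [← hg] at h1 ⊢
    rw [← WithTop.coe_add, eq_comm, WithTop.coe_eq_zero] at h1
    rw [WithTop.coe_eq_coe]
    exact eq_neg_of_add_eq_zero_right h1
  set A : ℕ → K := fun i => a i * t ^ p ^ i * e⁻¹ with hA
  have hvA : ∀ i, vf.v (A i) = vf.v (a i) + p ^ i • (μ : WithTop Γ) + ((-δ : Γ) : WithTop Γ) := by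
    intro i
    rw [hA]
    simp only
    rw [vf.v_mul, vf.v_mul, vf_pow, ht, hei]
  have hA0 : A 0 ≠ 0 :=
    mul_ne_zero (mul_ne_zero ha0 (pow_ne_zero _ ht0)) (inv_ne_zero he0)
  set c' : K := c * e⁻¹ with hc'
  have hc'0 : c' ≠ 0 := mul_ne_zero hc0 (inv_ne_zero he0)
  have hδδ : (δ : WithTop Γ) + ((-δ : Γ) : WithTop Γ) = 0 := by
    rw [← WithTop.coe_add, add_neg_cancel, WithTop.coe_zero]
  have hvc' : (0 : WithTop Γ) ≤ vf.v c' := by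
    rw [hc', vf.v_mul, hei, ← hδδ]
    exact add_le_add_left hc _
  obtain ⟨m, hmmem, hmeq⟩ := Finset.exists_mem_eq_inf (Finset.range (d + 1))
    (Finset.nonempty_range_iff.2 (Nat.succ_ne_zero d))
    (fun i => p ^ i • (μ : WithTop Γ) + vf.v (a i))
  have hδm : (δ : WithTop Γ) = p ^ m • (μ : WithTop Γ) + vf.v (a m) := by
    rw [hμ, hmeq]
  have hvAm : vf.v (A m) = 0 := by
    rw [hvA, add_comm (vf.v (a m)) _, ← hδm, hδδ]
  obtain ⟨y, hy_eq, hy_v⟩ := exists_root_nonneg vf p hp d A hA0 c' hc'0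
    ⟨m, hmmem, by rw [hvAm]; exact hvc'⟩
  refine ⟨t * y, ?_, ?_⟩
  · have step : ∀ i ∈ Finset.range (d + 1),
        a i * (t * y) ^ p ^ i = e * (A i * y ^ p ^ i) := by
      intro i _
      rw [hA]
      simp only
      field_simp
      ring
    rw [Finset.sum_congr rfl step, ← Finset.mul_sum, hy_eq, hc']
    field_simp
  · rw [vf.v_mul, ht]
    calc (μ : WithTop Γ) = (μ : WithTop Γ) + 0 := (add_zero _).symm
      _ ≤ (μ : WithTop Γ) + vf.v y := add_le_add_right hy_v _

end LemB


/-- Let `(K, v)` be a separably closed valued field of characteristic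
`p > 0`. For `j = 1, 2` let `r_j(x) = ∑_{i ≤ d_j} a_{j,i}·x^{p^i}` with coefficients in
`O`, `a_{j,0} ≠ 0` and `min_i v(a_{j,i}) = 0`. Let `b₁, b₂ ∈ K`, `δ₁, δ₂ ∈ Γ`, and let
`μ₁ = Υ(r₁, δ₁)`, `μ₂ = Υ(r₂, δ₂)` (i.e. `δ_j = min_i (p^i·μ_j + v(a_{j,i}))`), with
`μ₁ ≤ μ₂`. Then the system `v(r₁(u) − b₁) ≥ δ₁ ∧ v(r₂(u) − b₂) ≥ δ₂` is solvable iff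
the system `v(r₁(u) − b₁) ≥ δ₁ ∧ r₂(u) = b₂` is solvable. -/
theorem stmt_14 (p : ℕ) (hp : p.Prime) (K : Type*) [Field K] [CharP K p] [IsSepClosed K]
    (Γ : Type*) [AddCommGroup Γ] [LinearOrder Γ] [IsOrderedAddMonoid Γ] (vf : ValuedFieldAux K Γ)
    (d₁ d₂ : ℕ) (a₁ a₂ : ℕ → K)
    (ha₁ : ∀ i ≤ d₁, 0 ≤ vf.v (a₁ i)) (ha₁0 : a₁ 0 ≠ 0)
    (ha₁min : (Finset.range (d₁ + 1)).inf (fun i => vf.v (a₁ i)) = 0)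
    (ha₂ : ∀ i ≤ d₂, 0 ≤ vf.v (a₂ i)) (ha₂0 : a₂ 0 ≠ 0)
    (ha₂min : (Finset.range (d₂ + 1)).inf (fun i => vf.v (a₂ i)) = 0)
    (b₁ b₂ : K) (δ₁ δ₂ μ₁ μ₂ : Γ)
    (hμ₁ : (δ₁ : WithTop Γ) = (Finset.range (d₁ + 1)).inf
      (fun i => p ^ i • (μ₁ : WithTop Γ) + vf.v (a₁ i)))
    (hμ₂ : (δ₂ : WithTop Γ) = (Finset.range (d₂ + 1)).inf
      (fun i => p ^ i • (μ₂ : WithTop Γ) + vf.v (a₂ i)))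
    (hμ : μ₁ ≤ μ₂) :
    (∃ u : K,
        (δ₁ : WithTop Γ) ≤ vf.v ((∑ i ∈ Finset.range (d₁ + 1), a₁ i * u ^ (p ^ i)) - b₁) ∧
        (δ₂ : WithTop Γ) ≤ vf.v ((∑ i ∈ Finset.range (d₂ + 1), a₂ i * u ^ (p ^ i)) - b₂)) ↔
    (∃ u : K,
        (δ₁ : WithTop Γ) ≤ vf.v ((∑ i ∈ Finset.range (d₁ + 1), a₁ i * u ^ (p ^ i)) - b₁) ∧
        (∑ i ∈ Finset.range (d₂ + 1), a₂ i * u ^ (p ^ i)) = b₂) := by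
  haveI : Fact p.Prime := ⟨hp⟩
  constructor
  · rintro ⟨u, h1, h2⟩
    by_cases hc : (∑ i ∈ Finset.range (d₂ + 1), a₂ i * u ^ (p ^ i)) = b₂
    · exact ⟨u, h1, hc⟩
    · set c : K := b₂ - ∑ i ∈ Finset.range (d₂ + 1), a₂ i * u ^ (p ^ i) with hcdef
      have hc0 : c ≠ 0 := sub_ne_zero.2 (Ne.symm hc)
      have hvc : (δ₂ : WithTop Γ) ≤ vf.v c := by
        have hceq : c = -((∑ i ∈ Finset.range (d₂ + 1), a₂ i * u ^ (p ^ i)) - b₂) := by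
          rw [hcdef, neg_sub]
        rw [hceq, vf_neg]
        exact h2
      obtain ⟨w, hw_eq, hw_v⟩ := exists_exact_solution vf p hp d₂ a₂ ha₂0 δ₂ μ₂ hμ₂ c hc0 hvc
      have hadd : ∀ (d : ℕ) (a : ℕ → K),
          (∑ i ∈ Finset.range (d + 1), a i * (u + w) ^ (p ^ i))
            = (∑ i ∈ Finset.range (d + 1), a i * u ^ (p ^ i))
              + (∑ i ∈ Finset.range (d + 1), a i * w ^ (p ^ i)) := by
        intro d a
        rw [← Finset.sum_add_distrib]
        refine Finset.sum_congr rfl fun i _ => ?_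
        rw [add_pow_char_pow, mul_add]
      refine ⟨u + w, ?_, ?_⟩
      · have hsplit : (∑ i ∈ Finset.range (d₁ + 1), a₁ i * (u + w) ^ (p ^ i)) - b₁
            = ((∑ i ∈ Finset.range (d₁ + 1), a₁ i * u ^ (p ^ i)) - b₁)
              + (∑ i ∈ Finset.range (d₁ + 1), a₁ i * w ^ (p ^ i)) := by
          rw [hadd]; ring
        rw [hsplit]
        refine le_trans (le_min h1 ?_) (vf.v_add _ _)
        refine vf_sum_ge vf _ _ _ fun i hi => ?_
        have h3 : (δ₁ : WithTop Γ) ≤ p ^ i • (μ₁ : WithTop Γ) + vf.v (a₁ i) :=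
          hμ₁ ▸ Finset.inf_le hi
        calc (δ₁ : WithTop Γ) ≤ p ^ i • (μ₁ : WithTop Γ) + vf.v (a₁ i) := h3
          _ ≤ p ^ i • vf.v w + vf.v (a₁ i) := by
            refine add_le_add_left (nsmul_le_nsmul_right ?_ _) _
            exact le_trans (WithTop.coe_le_coe.2 hμ) hw_v
          _ = vf.v (a₁ i * w ^ (p ^ i)) := by rw [vf.v_mul, vf_pow, add_comm]
      · rw [hadd, hw_eq, hcdef]
        ring
  · rintro ⟨u, h1, h2⟩
    exact ⟨u, h1, by rw [h2, sub_self, vf_zero]; exact le_top⟩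
end

section
/- Let (K, v) be a separably closed valued field of characteristic p > 0 with valuation ring O and value group Γ = v(K^×). Let r(x) = ∑_{i=0}^{d} a_i·x^{p^i} be an additive polynomial with all a_i ∈ O, a_0 ≠ 0, and min_i v(a_i) = 0. Let b, b_1 ∈ K, let δ ∈ Γ, and let δ' ∈ Γ be such that p·Υ(r, δ') ≥ δ. Then there exists u ∈ K with r(u) = b and v(u^p − b_1) ≥ δ if and only if there exists u ∈ K with v(r(u) − b) ≥ δ' and v(u^p − b_1) ≥ δ. -/
namespace StmtAux

lemma coe_nsmul {Γ : Type*} [AddCommGroup Γ] [LinearOrder Γ] [IsOrderedAddMonoid Γ] (n : ℕ) (γ : Γ) :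
    ((n • γ : Γ) : WithTop Γ) = n • (γ : WithTop Γ) := by
  induction n with
  | zero => simp
  | succ n ih => rw [succ_nsmul, succ_nsmul, WithTop.coe_add, ih]

variable {K : Type*} [Field K] {Γ : Type*} [AddCommGroup Γ] [LinearOrder Γ] [IsOrderedAddMonoid Γ]
  (vf : ValuedFieldAux K Γ)

lemma v_zero : vf.v 0 = ⊤ := (vf.v_eq_top_iff 0).mpr rfl

lemma v_ne_top {x : K} (hx : x ≠ 0) : vf.v x ≠ ⊤ :=
  fun h => hx ((vf.v_eq_top_iff x).mp h)

lemma v_one : vf.v 1 = 0 := by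
  obtain ⟨g, hg⟩ := WithTop.ne_top_iff_exists.mp (v_ne_top vf (one_ne_zero (α := K)))
  have h := vf.v_mul 1 1
  rw [mul_one, ← hg, ← WithTop.coe_add, WithTop.coe_inj] at h
  have hg0 : g = 0 := left_eq_add.mp h
  rw [← hg, hg0, WithTop.coe_zero]

lemma v_neg_one : vf.v (-1 : K) = 0 := by
  obtain ⟨g, hg⟩ := WithTop.ne_top_iff_exists.mp
    (v_ne_top vf (neg_ne_zero.mpr (one_ne_zero (α := K))))
  have h := vf.v_mul (-1 : K) (-1)
  rw [neg_mul_neg, one_mul, v_one, ← hg, ← WithTop.coe_add] at h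
  rw [← WithTop.coe_zero, WithTop.coe_inj] at h
  have hg0 : g = 0 := by
    rcases lt_trichotomy g 0 with hl | h0 | hl
    · have h2 := add_lt_add hl hl
      rw [add_zero] at h2
      exact absurd h.symm (ne_of_lt h2)
    · exact h0
    · have h2 := add_lt_add hl hl
      rw [add_zero] at h2
      exact absurd h (ne_of_lt h2)
  rw [← hg, hg0, WithTop.coe_zero]

lemma v_neg (x : K) : vf.v (-x) = vf.v x := by
  have h := vf.v_mul (-1 : K) x
  rwa [neg_one_mul, v_neg_one, zero_add] at h

lemma v_pow (x : K) (n : ℕ) : vf.v (x ^ n) = n • vf.v x := by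
  induction n with
  | zero => simp [v_one]
  | succ n ih => rw [pow_succ, vf.v_mul, ih, succ_nsmul]

lemma v_add_ge {x y : K} {γ : WithTop Γ} (hx : γ ≤ vf.v x) (hy : γ ≤ vf.v y) :
    γ ≤ vf.v (x + y) :=
  le_trans (le_min hx hy) (vf.v_add x y)

lemma v_multiset_prod (S : Multiset K) : vf.v S.prod = (S.map vf.v).sum := by
  induction S using Multiset.induction with
  | empty => simp [v_one]
  | cons a S ih => simp [vf.v_mul, ih]

lemma v_multiset_sum_ge (S : Multiset K) (γ : WithTop Γ) (h : ∀ x ∈ S, γ ≤ vf.v x) :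
    γ ≤ vf.v S.sum := by
  induction S using Multiset.induction with
  | empty => simp [v_zero]
  | cons a S ih =>
    rw [Multiset.sum_cons]
    exact v_add_ge vf (h a (Multiset.mem_cons_self a S))
      (ih fun x hx => h x (Multiset.mem_cons_of_mem hx))

lemma v_prod_le_card_smul (S : Multiset K) (m : Γ)
    (h : ∀ x ∈ S, vf.v x ≤ (m : WithTop Γ)) :
    vf.v S.prod ≤ (((Multiset.card S) • m : Γ) : WithTop Γ) := by
  induction S using Multiset.induction with
  | empty => simp [v_one]
  | cons a S ih =>
    rw [Multiset.prod_cons, vf.v_mul, Multiset.card_cons, succ_nsmul',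
      WithTop.coe_add]
    exact add_le_add (h a (Multiset.mem_cons_self a S))
      (ih fun x hx => h x (Multiset.mem_cons_of_mem hx))

lemma powersetCard_self' {α : Type*} (R : Multiset α) :
    R.powersetCard (Multiset.card R) = {R} := by
  have h1 : Multiset.card (R.powersetCard (Multiset.card R)) = 1 := by
    rw [Multiset.card_powersetCard, Nat.choose_self]
  obtain ⟨t, ht⟩ := Multiset.card_eq_one.mp h1
  have htm : t ∈ R.powersetCard (Multiset.card R) := by
    rw [ht]; exact Multiset.mem_singleton_self t
  rw [Multiset.mem_powersetCard] at htm
  have htR : t = R := Multiset.eq_of_le_of_card_le htm.1 (le_of_eq htm.2.symm)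
  rw [ht, htR]

lemma exists_max_v (S : Multiset K) (hS : S ≠ 0) :
    ∃ a ∈ S, ∀ x ∈ S, vf.v x ≤ vf.v a := by
  induction S using Multiset.induction with
  | empty => exact absurd rfl hS
  | cons a S ih =>
    rcases eq_or_ne S 0 with h0 | h0
    · subst h0
      exact ⟨a, Multiset.mem_cons_self a 0, by
        intro x hx
        rw [Multiset.mem_cons] at hx
        rcases hx with rfl | hx
        · exact le_rfl
        · simp at hx⟩
    · obtain ⟨b, hbS, hb⟩ := ih h0
      rcases le_total (vf.v a) (vf.v b) with hab | hab
      · exact ⟨b, Multiset.mem_cons_of_mem hbS, by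
          intro x hx
          rw [Multiset.mem_cons] at hx
          rcases hx with rfl | hx
          · exact hab
          · exact hb x hx⟩
      · exact ⟨a, Multiset.mem_cons_self a S, by
          intro x hx
          rw [Multiset.mem_cons] at hx
          rcases hx with rfl | hx
          · exact le_rfl
          · exact le_trans (hb x hx) hab⟩

end StmtAux

open StmtAux in
/-- Key lemma: an additive polynomial equation `r(ε) = c` with `v(c) ≥ δ'` has a
solution with `v(ε) ≥ μ'`, where `δ' = min_i (p^i μ' + v(a_i))`. -/
lemma exists_root_stmt15 (p : ℕ) (hp : p.Prime) (K : Type*) [Field K] [CharP K p]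
    [IsSepClosed K] (Γ : Type*) [AddCommGroup Γ] [LinearOrder Γ] [IsOrderedAddMonoid Γ] (vf : ValuedFieldAux K Γ)
    (d : ℕ) (a : ℕ → K) (ha0 : a 0 ≠ 0) (μ' δ' : Γ)
    (hμ' : (δ' : WithTop Γ) = (Finset.range (d + 1)).inf
      (fun i => p ^ i • (μ' : WithTop Γ) + vf.v (a i)))
    (c : K) (hc : (δ' : WithTop Γ) ≤ vf.v c) :
    ∃ ε : K, (∑ i ∈ Finset.range (d + 1), a i * ε ^ (p ^ i)) = c ∧
      (μ' : WithTop Γ) ≤ vf.v ε := by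
  classical
  by_cases hc0 : c = 0
  · refine ⟨0, ?_, by rw [v_zero]; exact le_top⟩
    subst hc0
    refine Finset.sum_eq_zero fun i _ => ?_
    rw [zero_pow (pow_pos hp.pos i).ne', mul_zero]
  haveI := Fact.mk hp
  -- the index attaining the inf
  obtain ⟨i₀, hi₀mem, hi₀⟩ := Finset.exists_mem_eq_inf (Finset.range (d + 1))
    ⟨0, Finset.mem_range.mpr (Nat.succ_pos d)⟩
    (fun i => p ^ i • (μ' : WithTop Γ) + vf.v (a i))
  have hi₀d : i₀ ≤ d := Nat.lt_succ_iff.mp (Finset.mem_range.mp hi₀mem)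
  have hδ'eq : (δ' : WithTop Γ) = p ^ i₀ • (μ' : WithTop Γ) + vf.v (a i₀) := by
    rw [hμ', hi₀]
  have hvai₀ne : vf.v (a i₀) ≠ ⊤ := by
    intro h
    rw [h, add_top] at hδ'eq
    exact WithTop.coe_ne_top hδ'eq
  have hai₀ : a i₀ ≠ 0 := fun h => hvai₀ne (h ▸ v_zero vf)
  -- the top nonzero coefficient
  set e := Nat.findGreatest (fun i => a i ≠ 0) d with he
  have hae : a e ≠ 0 := Nat.findGreatest_spec (P := fun i => a i ≠ 0) (Nat.zero_le d) ha0
  have hed : e ≤ d := Nat.findGreatest_le d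
  have hgt : ∀ i, e < i → i ≤ d → a i = 0 := fun i h1 h2 =>
    not_not.mp (Nat.findGreatest_is_greatest (P := fun i => a i ≠ 0) h1 h2)
  have hi₀e : i₀ ≤ e := Nat.le_findGreatest (P := fun i => a i ≠ 0) hi₀d hai₀
  -- the polynomial
  set f : Polynomial K :=
    (∑ i ∈ Finset.range (d + 1), Polynomial.C (a i) * Polynomial.X ^ (p ^ i))
      - Polynomial.C c with hf
  have hcoeff : ∀ k, f.coeff k =
      (∑ i ∈ Finset.range (d + 1), if k = p ^ i then a i else 0)
        - (if k = 0 then c else 0) := by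
    intro k
    simp [hf, Polynomial.finset_sum_coeff, Polynomial.coeff_X_pow, Polynomial.coeff_C,
      mul_ite, mul_one, mul_zero]
  have hpow_inj : ∀ i j : ℕ, p ^ i = p ^ j → i = j := fun i j h =>
    Nat.pow_right_injective hp.two_le h
  have hcoeffpi : ∀ i ≤ d, f.coeff (p ^ i) = a i := by
    intro i hid
    rw [hcoeff, if_neg (pow_pos hp.pos i).ne', sub_zero,
      Finset.sum_eq_single i (fun j _ hji => if_neg fun h => hji (hpow_inj j i h.symm))
        (fun h => absurd (Finset.mem_range.mpr (Nat.lt_succ_of_le hid)) h),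
      if_pos rfl]
  have hcoeff0 : f.coeff 0 = -c := by
    rw [hcoeff, if_pos rfl,
      Finset.sum_eq_zero fun i _ => if_neg (pow_pos hp.pos i).ne, zero_sub]
  have hcoeff_gt : ∀ k, p ^ e < k → f.coeff k = 0 := by
    intro k hk
    have hk0 : k ≠ 0 := by
      have := pow_pos hp.pos e
      omega
    rw [hcoeff, if_neg hk0, sub_zero]
    refine Finset.sum_eq_zero fun i hi => ?_
    by_cases h : k = p ^ i
    · have hei : e < i := by
        by_contra hle
        push_neg at hle
        have := Nat.pow_le_pow_right hp.pos hle
        omega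
      rw [if_pos h, hgt i hei (Nat.lt_succ_iff.mp (Finset.mem_range.mp hi))]
    · rw [if_neg h]
  have hfne : f ≠ 0 := fun h =>
    hae (by rw [← hcoeffpi e hed, h, Polynomial.coeff_zero])
  have hdeg : f.natDegree = p ^ e := by
    apply le_antisymm
    · exact Polynomial.natDegree_le_iff_coeff_eq_zero.mpr hcoeff_gt
    · exact Polynomial.le_natDegree_of_ne_zero (by rw [hcoeffpi e hed]; exact hae)
  have hlead : f.leadingCoeff = a e := by
    rw [Polynomial.leadingCoeff, hdeg, hcoeffpi e hed]
  -- derivative and separability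
  have hderiv : Polynomial.derivative f = Polynomial.C (a 0) := by
    rw [hf, map_sub, Polynomial.derivative_C, sub_zero, map_sum,
      Finset.sum_eq_single 0 (fun i _ hne => by
        rw [Polynomial.derivative_C_mul, Polynomial.derivative_X_pow]
        have hzero : ((p ^ i : ℕ) : K) = 0 := by
          rw [Nat.cast_pow, CharP.cast_eq_zero K p, zero_pow hne]
        rw [hzero, map_zero, zero_mul, mul_zero])
      (fun h => absurd (Finset.mem_range.mpr (Nat.succ_pos d)) h)]
    simp
  have hsep : f.Separable := by
    rw [Polynomial.separable_def, hderiv]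
    obtain ⟨u, hu⟩ := Polynomial.isUnit_C.mpr (Ne.isUnit ha0)
    exact ⟨0, ↑u⁻¹, by rw [← hu, zero_mul, zero_add, Units.inv_mul]⟩
  have hsplits : f.Splits := IsSepClosed.splits_of_separable f hsep
  set R := f.roots with hR
  have hcard : Multiset.card R = p ^ e := by
    rw [hR, Polynomial.splits_iff_card_roots.mp hsplits, hdeg]
  have hroot0 : (0 : K) ∉ R := by
    intro h
    have h0 := Polynomial.isRoot_of_mem_roots h
    rw [Polynomial.IsRoot, ← Polynomial.coeff_zero_eq_eval_zero, hcoeff0,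
      neg_eq_zero] at h0
    exact hc0 h0
  have hRne : R ≠ 0 := by
    intro h
    rw [h, Multiset.card_zero] at hcard
    exact (pow_pos hp.pos e).ne' hcard.symm
  -- evaluation of f
  have heval : ∀ x : K, f.eval x = (∑ i ∈ Finset.range (d + 1), a i * x ^ (p ^ i)) - c := by
    intro x
    simp [hf, Polynomial.eval_finset_sum]
  -- pick a root of maximal valuation
  obtain ⟨ε, hεR, hεmax⟩ := exists_max_v vf R hRne
  have hεne : ε ≠ 0 := fun h => hroot0 (h ▸ hεR)
  obtain ⟨γm, hγm⟩ := WithTop.ne_top_iff_exists.mp (v_ne_top vf hεne)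
  obtain ⟨γe, hγe⟩ := WithTop.ne_top_iff_exists.mp (v_ne_top vf hae)
  have hprodne : R.prod ≠ 0 := fun h => hroot0 (Multiset.prod_eq_zero_iff.mp h)
  obtain ⟨γP, hγP⟩ := WithTop.ne_top_iff_exists.mp (v_ne_top vf hprodne)
  set j := p ^ i₀ with hj
  have hjn : j ≤ p ^ e := Nat.pow_le_pow_right hp.pos hi₀e
  -- Vieta for the coefficient a i₀
  have hV : a i₀ = a e * (-1 : K) ^ (p ^ e - j) * R.esymm (p ^ e - j) := by
    have h := Polynomial.coeff_eq_esymm_roots_of_splits hsplits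
      (k := j) (by rw [hdeg]; exact hjn)
    rwa [hdeg, hlead, ← hR, hcoeffpi i₀ hi₀d] at h
  have hvai₀ : vf.v (a i₀) = vf.v (a e) + vf.v (R.esymm (p ^ e - j)) := by
    rw [hV, vf.v_mul, vf.v_mul, v_pow, v_neg_one, smul_zero, add_zero]
  -- Vieta for the constant coefficient
  have hV0 : -c = a e * (-1 : K) ^ (p ^ e) * R.esymm (p ^ e) := by
    have h := Polynomial.coeff_eq_esymm_roots_of_splits hsplits
      (k := 0) (Nat.zero_le _)
    rwa [hdeg, hlead, ← hR, hcoeff0, Nat.sub_zero] at h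
  have hesymm_card : R.esymm (p ^ e) = R.prod := by
    rw [Multiset.esymm, ← hcard, powersetCard_self', Multiset.map_singleton,
      Multiset.sum_singleton]
  have hvc : vf.v c = vf.v (a e) + vf.v R.prod := by
    rw [← v_neg vf c, hV0, hesymm_card, vf.v_mul, vf.v_mul, v_pow, v_neg_one,
      smul_zero, add_zero]
  -- bound on the valuation of the elementary symmetric polynomial
  have hes : ((γP - j • γm : Γ) : WithTop Γ) ≤ vf.v (R.esymm (p ^ e - j)) := by
    rw [Multiset.esymm]
    apply v_multiset_sum_ge
    intro t ht
    rw [Multiset.mem_map] at ht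
    obtain ⟨S, hSmem, rfl⟩ := ht
    rw [Multiset.mem_powersetCard] at hSmem
    obtain ⟨hSle, hScard⟩ := hSmem
    have hRsplit : (R - S) + S = R := tsub_add_cancel_of_le hSle
    have hcardRS : Multiset.card (R - S) = j := by
      rw [Multiset.card_sub hSle, hcard, hScard]
      omega
    have hprod : vf.v R.prod = vf.v ((R - S).prod) + vf.v S.prod := by
      rw [← hRsplit, Multiset.prod_add, vf.v_mul, hRsplit]
    have hbound : vf.v ((R - S).prod) ≤ ((j • γm : Γ) : WithTop Γ) := by
      rw [← hcardRS]
      apply v_prod_le_card_smul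
      intro x hx
      rw [hγm]
      exact hεmax x (Multiset.mem_of_le (Multiset.sub_le_self R S) hx)
    rcases eq_or_ne (vf.v S.prod) ⊤ with hST | hST
    · rw [hST]; exact le_top
    obtain ⟨γS, hγS⟩ := WithTop.ne_top_iff_exists.mp hST
    have : (γP : WithTop Γ) ≤ ((j • γm : Γ) : WithTop Γ) + (γS : WithTop Γ) := by
      rw [hγP, hprod, hγS]
      exact add_le_add_left hbound _
    rw [← WithTop.coe_add, WithTop.coe_le_coe] at this
    rw [← hγS, WithTop.coe_le_coe]
    exact sub_le_iff_le_add'.mpr this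
  -- combine everything
  have hmain : (p ^ i₀ • μ' : Γ) + δ' ≤ δ' + j • γm := by
    have h1 : (δ' : WithTop Γ) ≤ ((γe + γP : Γ) : WithTop Γ) := by
      rw [WithTop.coe_add, hγe, hγP, ← hvc]; exact hc
    have h2 : ((p ^ i₀ • μ' + γe + (γP - j • γm) : Γ) : WithTop Γ) ≤ (δ' : WithTop Γ) := by
      rw [hδ'eq, hvai₀, ← hγe, ← coe_nsmul]
      rw [WithTop.coe_add, WithTop.coe_add, add_assoc]
      exact add_le_add_right (add_le_add_right hes _) _
    rw [WithTop.coe_le_coe] at h1 h2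
    have := le_trans (add_le_add_right h1 (p ^ i₀ • μ')) (by
      calc p ^ i₀ • μ' + (γe + γP)
          = p ^ i₀ • μ' + γe + (γP - j • γm) + j • γm := by abel
        _ ≤ δ' + j • γm := add_le_add_left h2 _)
    exact this
  have hjm : j • μ' ≤ j • γm := by
    rw [hj] at hmain ⊢
    rw [add_comm (δ' : Γ) _] at hmain
    exact le_of_add_le_add_right hmain
  have hμm : μ' ≤ γm := by
    by_contra h
    push_neg at h
    exact absurd hjm (not_le.mpr (nsmul_lt_nsmul_right (pow_pos hp.pos i₀).ne' h))
  refine ⟨ε, ?_, ?_⟩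
  · have hev : f.eval ε = 0 := (Polynomial.isRoot_of_mem_roots hεR)
    rw [heval, sub_eq_zero] at hev
    exact hev
  · rw [← hγm, WithTop.coe_le_coe]
    exact hμm

open StmtAux in
/-- Let `(K, v)` be a separably closed valued field of characteristic
`p > 0`. Let `r(x) = ∑_{i ≤ d} a_i·x^{p^i}` with coefficients in `O`, `a_0 ≠ 0` and
`min_i v(a_i) = 0`. Let `b, b₁ ∈ K`, `δ ∈ Γ`, and let `δ' ∈ Γ` with `μ' = Υ(r, δ')`
(i.e. `δ' = min_i (p^i·μ' + v(a_i))`) satisfying `p·Υ(r, δ') ≥ δ`. Then the system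
`r(u) = b ∧ v(u^p − b₁) ≥ δ` is solvable iff the system
`v(r(u) − b) ≥ δ' ∧ v(u^p − b₁) ≥ δ` is solvable. -/
theorem stmt_15 (p : ℕ) (hp : p.Prime) (K : Type*) [Field K] [CharP K p] [IsSepClosed K]
    (Γ : Type*) [AddCommGroup Γ] [LinearOrder Γ] [IsOrderedAddMonoid Γ] (vf : ValuedFieldAux K Γ)
    (d : ℕ) (a : ℕ → K)
    (ha : ∀ i ≤ d, 0 ≤ vf.v (a i)) (ha0 : a 0 ≠ 0)
    (hamin : (Finset.range (d + 1)).inf (fun i => vf.v (a i)) = 0)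
    (b b₁ : K) (δ δ' μ' : Γ)
    (hμ' : (δ' : WithTop Γ) = (Finset.range (d + 1)).inf
      (fun i => p ^ i • (μ' : WithTop Γ) + vf.v (a i)))
    (hδ : δ ≤ p • μ') :
    (∃ u : K, (∑ i ∈ Finset.range (d + 1), a i * u ^ (p ^ i)) = b ∧
        (δ : WithTop Γ) ≤ vf.v (u ^ p - b₁)) ↔
    (∃ u : K,
        (δ' : WithTop Γ) ≤ vf.v ((∑ i ∈ Finset.range (d + 1), a i * u ^ (p ^ i)) - b) ∧
        (δ : WithTop Γ) ≤ vf.v (u ^ p - b₁)) := by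
  haveI := Fact.mk hp
  constructor
  · rintro ⟨u, hu, h2⟩
    exact ⟨u, by rw [hu, sub_self, v_zero]; exact le_top, h2⟩
  · rintro ⟨u₀, h1, h2⟩
    set c := b - ∑ i ∈ Finset.range (d + 1), a i * u₀ ^ (p ^ i) with hcdef
    have hc : (δ' : WithTop Γ) ≤ vf.v c := by
      rw [hcdef, ← neg_sub, v_neg]
      exact h1
    obtain ⟨ε, hε1, hε2⟩ := exists_root_stmt15 p hp K Γ vf d a ha0 μ' δ' hμ' c hc
    refine ⟨u₀ + ε, ?_, ?_⟩
    · have hterm : ∀ i ∈ Finset.range (d + 1),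
          a i * (u₀ + ε) ^ (p ^ i) = a i * u₀ ^ (p ^ i) + a i * ε ^ (p ^ i) := by
        intro i _
        rw [add_pow_char_pow, mul_add]
      rw [Finset.sum_congr rfl hterm, Finset.sum_add_distrib, hε1, hcdef]
      ring
    · have hpow : (u₀ + ε) ^ p = u₀ ^ p + ε ^ p := add_pow_char ..
      have hre : u₀ ^ p + ε ^ p - b₁ = (u₀ ^ p - b₁) + ε ^ p := by ring
      rw [hpow, hre]
      apply v_add_ge vf h2
      rw [v_pow]
      calc (δ : WithTop Γ) ≤ ((p • μ' : Γ) : WithTop Γ) := WithTop.coe_le_coe.mpr hδ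
        _ = p • (μ' : WithTop Γ) := coe_nsmul p μ'
        _ ≤ p • vf.v ε := nsmul_le_nsmul_right hε2 p
end

section
/- Let (K, v) be a valued field of characteristic p > 0 with valuation ring O. Let b_0, …, b_n ∈ O with min_{0 ≤ j ≤ n} v(b_j) = 0, and let f ∈ O. Then: (a) among the elements c_0 = −b_0·f, c_j = b_{j−1}^p − b_j·f for 1 ≤ j ≤ n, and c_{n+1} = b_n^p (the coefficients of the additive polynomial x ↦ g(x)^p − g(x)·f, where g(x) = ∑_j b_j·x^{p^j}), at least one has valuation 0; and (b) among the elements c_0 = −b_0, c_j = b_{j−1}^p·f − b_j for 1 ≤ j ≤ n, and c_{n+1} = b_n^p·f (the coefficients of x ↦ g(x)^p·f − g(x)), at least one has valuation 0. -/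
namespace ValuedFieldAux

variable {K : Type*} [Field K] {Γ : Type*} [AddCommGroup Γ] [LinearOrder Γ] [IsOrderedAddMonoid Γ]
  (vf : ValuedFieldAux K Γ)

lemma v_one : vf.v 1 = 0 := by
  have h := vf.v_mul 1 1
  rw [one_mul] at h
  rcases eq_or_ne (vf.v 1) ⊤ with ht | ht
  · exact absurd ((vf.v_eq_top_iff 1).1 ht) one_ne_zero
  · lift vf.v 1 to Γ using ht with a
    have ha : a + a = a + 0 := by
      rw [add_zero]; exact_mod_cast h.symm
    have : a = 0 := add_left_cancel ha
    exact_mod_cast this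

lemma v_neg (x : K) : vf.v (-x) = vf.v x := by
  have hm1 : vf.v (-1 : K) = 0 := by
    have h : vf.v ((-1 : K) * (-1)) = vf.v (-1) + vf.v (-1) := vf.v_mul _ _
    rw [neg_one_mul, neg_neg, vf.v_one] at h
    rcases eq_or_ne (vf.v (-1 : K)) ⊤ with ht | ht
    · exact absurd ((vf.v_eq_top_iff _).1 ht) (by norm_num)
    · lift vf.v (-1 : K) to Γ using ht with a
      have ha : a + a = 0 := by exact_mod_cast h.symm
      have : a = 0 := by
        rcases lt_trichotomy a 0 with h1 | h1 | h1
        · exact absurd ha (by have := add_neg h1 h1; exact ne_of_lt this)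
        · exact h1
        · exact absurd ha (by have := add_pos h1 h1; exact (ne_of_gt this))
      exact_mod_cast this
  calc vf.v (-x) = vf.v ((-1) * x) := by rw [neg_one_mul]
    _ = vf.v (-1) + vf.v x := vf.v_mul _ _
    _ = vf.v x := by rw [hm1, zero_add]

lemma v_pow_eq_zero {x : K} (hx : vf.v x = 0) (k : ℕ) : vf.v (x ^ k) = 0 := by
  induction k with
  | zero => simpa using vf.v_one
  | succ m ih => rw [pow_succ, vf.v_mul, ih, hx, add_zero]

lemma v_pow_nonneg {x : K} (hx : 0 ≤ vf.v x) (k : ℕ) : 0 ≤ vf.v (x ^ k) := by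
  induction k with
  | zero => simp [vf.v_one]
  | succ m ih => rw [pow_succ, vf.v_mul]; exact add_nonneg ih hx

lemma v_pow_pos {x : K} (hx : 0 < vf.v x) {k : ℕ} (hk : 1 ≤ k) :
    0 < vf.v (x ^ k) := by
  obtain ⟨m, rfl⟩ := Nat.exists_eq_add_of_le hk
  rw [add_comm, pow_succ, vf.v_mul]
  exact lt_of_lt_of_le hx (le_add_of_nonneg_left (vf.v_pow_nonneg (le_of_lt hx) m))

lemma v_sub_eq_zero {x y : K} (hx : vf.v x = 0) (hy : 0 < vf.v y) :
    vf.v (x - y) = 0 := by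
  have h1 : 0 ≤ vf.v (x - y) := by
    have := vf.v_add x (-y)
    rw [← sub_eq_add_neg, vf.v_neg, hx] at this
    exact le_trans (le_min le_rfl (le_of_lt hy)) this
  have h2 : vf.v (x - y) ≤ 0 := by
    by_contra hcon
    push_neg at hcon
    have := vf.v_add (x - y) y
    rw [sub_add_cancel, hx] at this
    exact absurd this (not_le_of_gt (lt_min hcon hy))
  exact le_antisymm h2 h1

end ValuedFieldAux

/-- Let `(K, v)` be a valued field of characteristic `p > 0` with
valuation ring `O`. Let `b_0, …, b_n ∈ O` with `min_j v(b_j) = 0` and `f ∈ O`. Then: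
(a) among the coefficients `c_0 = −b_0·f`, `c_j = b_{j−1}^p − b_j·f` (`1 ≤ j ≤ n`),
`c_{n+1} = b_n^p` of `x ↦ g(x)^p − g(x)·f` (where `g(x) = ∑_j b_j·x^{p^j}`), at least
one has valuation `0`; and (b) among `c'_0 = −b_0`, `c'_j = b_{j−1}^p·f − b_j`
(`1 ≤ j ≤ n`), `c'_{n+1} = b_n^p·f` (the coefficients of `x ↦ g(x)^p·f − g(x)`),
at least one has valuation `0`. -/
theorem stmt_17 (p : ℕ) (hp : p.Prime) (K : Type*) [Field K] [CharP K p]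
    (Γ : Type*) [AddCommGroup Γ] [LinearOrder Γ] [IsOrderedAddMonoid Γ] (vf : ValuedFieldAux K Γ)
    (n : ℕ) (b : ℕ → K)
    (hb : ∀ j ≤ n, 0 ≤ vf.v (b j))
    (hbmin : (Finset.range (n + 1)).inf (fun j => vf.v (b j)) = 0)
    (f : K) (hf : 0 ≤ vf.v f)
    (c c' : ℕ → K)
    (hc0 : c 0 = -(b 0 * f))
    (hcj : ∀ j, 1 ≤ j → j ≤ n → c j = (b (j - 1)) ^ p - b j * f)
    (hcn : c (n + 1) = (b n) ^ p)
    (hc'0 : c' 0 = -(b 0))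
    (hc'j : ∀ j, 1 ≤ j → j ≤ n → c' j = (b (j - 1)) ^ p * f - b j)
    (hc'n : c' (n + 1) = (b n) ^ p * f) :
    (∃ j ≤ n + 1, vf.v (c j) = 0) ∧ (∃ j ≤ n + 1, vf.v (c' j) = 0) := by
  classical
  have hp1 : 1 ≤ p := hp.one_lt.le
  -- the set of indices where the valuation is 0
  set S : Finset ℕ := (Finset.range (n + 1)).filter (fun j => vf.v (b j) = 0) with hS
  have hSne : S.Nonempty := by
    obtain ⟨j, hjmem, hj⟩ :=
      Finset.exists_mem_eq_inf (Finset.range (n + 1)) ⟨0, Finset.mem_range.mpr (Nat.succ_pos n)⟩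
        (fun j => vf.v (b j))
    exact ⟨j, Finset.mem_filter.mpr ⟨hjmem, by rw [← hj, hbmin]⟩⟩
  -- strict positivity off S
  have hpos : ∀ j ≤ n, j ∉ S → 0 < vf.v (b j) := by
    intro j hj hjS
    refine lt_of_le_of_ne (hb j hj) ?_
    intro h
    exact hjS (Finset.mem_filter.mpr ⟨Finset.mem_range.mpr (Nat.lt_succ_of_le hj), h.symm⟩)
  constructor
  · -- part (a): use the largest index in S
    set M := S.max' hSne with hM
    have hMS : M ∈ S := S.max'_mem hSne
    have hMv : vf.v (b M) = 0 := (Finset.mem_filter.mp hMS).2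
    have hMn : M ≤ n := Nat.lt_succ_iff.mp (Finset.mem_range.mp (Finset.mem_filter.mp hMS).1)
    rcases eq_or_lt_of_le hMn with heq | hlt
    · refine ⟨n + 1, le_rfl, ?_⟩
      rw [hcn, ← heq]
      exact vf.v_pow_eq_zero hMv p
    · -- M < n, use index M + 1
      have hM1n : M + 1 ≤ n := hlt
      have hM1S : M + 1 ∉ S := fun hmem =>
        absurd (S.le_max' _ hmem) (by omega)
      have hbM1 : 0 < vf.v (b (M + 1)) := hpos (M + 1) hM1n hM1S
      refine ⟨M + 1, by omega, ?_⟩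
      rw [hcj (M + 1) (by omega) hM1n, Nat.add_sub_cancel]
      refine vf.v_sub_eq_zero (vf.v_pow_eq_zero hMv p) ?_
      rw [vf.v_mul]
      exact lt_of_lt_of_le hbM1 (le_add_of_nonneg_right hf)
  · -- part (b): use the smallest index in S
    set M := S.min' hSne with hM
    have hMS : M ∈ S := S.min'_mem hSne
    have hMv : vf.v (b M) = 0 := (Finset.mem_filter.mp hMS).2
    have hMn : M ≤ n := Nat.lt_succ_iff.mp (Finset.mem_range.mp (Finset.mem_filter.mp hMS).1)
    rcases Nat.eq_zero_or_pos M with heq | hposM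
    · refine ⟨0, by omega, ?_⟩
      rw [hc'0, vf.v_neg, ← heq]
      exact hMv
    · have hM1S : M - 1 ∉ S := fun hmem =>
        absurd (S.min'_le _ hmem) (by omega)
      have hbM1 : 0 < vf.v (b (M - 1)) := hpos (M - 1) (by omega) hM1S
      refine ⟨M, by omega, ?_⟩
      rw [hc'j M hposM hMn]
      have hA : 0 < vf.v ((b (M - 1)) ^ p * f) := by
        rw [vf.v_mul]
        exact lt_of_lt_of_le (vf.v_pow_pos hbM1 hp1) (le_add_of_nonneg_right hf)
      have := vf.v_sub_eq_zero hMv hA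
      rw [show (b (M - 1)) ^ p * f - b M = -(b M - (b (M - 1)) ^ p * f) by ring, vf.v_neg]
      exact this
end
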